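/- In the ring of integers ℤ[ζ_7] of ℚ(ζ_7), the set {1, ζ_7, ζ_7²} is a basis of ℤ[ζ_7] as a module over O_{ℚ(√(-7))}, the ring of integers of ℚ(√(-7)). -/

import Mathlib

/-- In ℤ[ζ₇] ⊆ ℚ(ζ₇), the set {1, ζ₇, ζ₇²} is a basis of ℤ[ζ₇] as a module
over O_{ℚ(√-7)} = ℤ[(1+√-7)/2], where (1+√-7)/2 = 1 + ζ₇ + ζ₇² + ζ₇⁴: every element of
ℤ[ζ₇] has a unique expression c₀ + c₁ζ₇ + c₂ζ₇² with cᵢ ∈ O_{ℚ(√-7)}. -/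
theorem stmt_15 (ζ : CyclotomicField 7 ℚ) (hζ : IsPrimitiveRoot ζ 7) :
    ∀ x ∈ Algebra.adjoin ℤ ({ζ} : Set (CyclotomicField 7 ℚ)),
      ∃! c : Fin 3 → Algebra.adjoin ℤ ({1 + ζ + ζ ^ 2 + ζ ^ 4} : Set (CyclotomicField 7 ℚ)),
        (c 0 : CyclotomicField 7 ℚ) + (c 1 : CyclotomicField 7 ℚ) * ζ +
          (c 2 : CyclotomicField 7 ℚ) * ζ ^ 2 = x := by
  set α : CyclotomicField 7 ℚ := 1 + ζ + ζ ^ 2 + ζ ^ 4 with hα_def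
  set R := Algebra.adjoin ℤ ({α} : Set (CyclotomicField 7 ℚ)) with hR
  have h7 : ζ ^ 7 = 1 := hζ.pow_eq_one
  have hne : ζ ≠ 1 := hζ.ne_one (by norm_num)
  have hsum : 1 + ζ + ζ ^ 2 + ζ ^ 3 + ζ ^ 4 + ζ ^ 5 + ζ ^ 6 = 0 := by
    have h0 : (ζ - 1) * (1 + ζ + ζ ^ 2 + ζ ^ 3 + ζ ^ 4 + ζ ^ 5 + ζ ^ 6) = 0 := by
      linear_combination h7
    rcases mul_eq_zero.mp h0 with h | h
    · exact absurd (sub_eq_zero.mp h) hne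
    · exact h
  have hα2 : α ^ 2 = α - 2 := by
    rw [hα_def]; linear_combination 2 * hsum + ζ * h7
  have h3 : ζ ^ 3 = 1 + α * ζ + (α - 1) * ζ ^ 2 := by
    rw [hα_def]; linear_combination -hsum
  have h4 : ζ ^ 4 = (α - 1) - ζ - ζ ^ 2 := by
    rw [hα_def]; ring
  have hαR : α ∈ R := Algebra.subset_adjoin rfl
  have h1R : (1 : CyclotomicField 7 ℚ) ∈ R := one_mem R
  -- every element of R is a + b*α with integer a b
  have repr : ∀ x ∈ R, ∃ a b : ℤ, x = (a : CyclotomicField 7 ℚ) + (b : CyclotomicField 7 ℚ) * α := by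
    intro x hx
    induction hx using Algebra.adjoin_induction with
    | mem y hy =>
      rcases hy with rfl
      exact ⟨0, 1, by push_cast; ring⟩
    | algebraMap r => exact ⟨r, 0, by simp [Algebra.algebraMap_eq_smul_one, zsmul_eq_mul]⟩
    | add y z hy hz ihy ihz =>
      obtain ⟨a, b, rfl⟩ := ihy
      obtain ⟨c, d, rfl⟩ := ihz
      exact ⟨a + c, b + d, by push_cast; ring⟩
    | mul y z hy hz ihy ihz =>
      obtain ⟨a, b, rfl⟩ := ihy
      obtain ⟨c, d, rfl⟩ := ihz
      exact ⟨a * c - 2 * b * d, a * d + b * c + b * d, by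
        push_cast
        linear_combination (b : CyclotomicField 7 ℚ) * (d : CyclotomicField 7 ℚ) * hα2⟩
  -- linear independence of 1, ζ, ..., ζ^5 over ℚ
  have li : LinearIndependent ℚ (fun i : Fin 6 => ζ ^ (i : ℕ)) := by
    have hζ' : IsPrimitiveRoot ζ 7 := hζ
    haveI : IsCyclotomicExtension {7} ℚ (CyclotomicField 7 ℚ) :=
      have : NeZero ((7 : ℕ) : ℚ) := ⟨by norm_num⟩
      CyclotomicField.isCyclotomicExtension 7 ℚ
    have hdim : (hζ'.powerBasis ℚ).dim = 6 := by
      rw [IsPrimitiveRoot.powerBasis_dim,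
        ← hζ.minpoly_eq_cyclotomic_of_irreducible
          (Polynomial.cyclotomic.irreducible_rat (by norm_num)),
        Polynomial.natDegree_cyclotomic]
      norm_num [Nat.totient_prime (by norm_num : Nat.Prime 7)]
    have li0 := (hζ'.powerBasis ℚ).basis.linearIndependent
    have h2 := li0.comp (Fin.cast hdim.symm) (Fin.cast_injective _)
    convert h2 using 2 with i
    simp only [PowerBasis.coe_basis, IsPrimitiveRoot.powerBasis_gen, Function.comp_apply,
      Fin.coe_cast]
    rfl
  have hsmul : ∀ (q : ℚ) (x : CyclotomicField 7 ℚ), q • x = (q : CyclotomicField 7 ℚ) * x :=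
    fun q x => Rat.smul_def q x
  -- key uniqueness lemma
  have key : ∀ u0 u1 u2 : CyclotomicField 7 ℚ, u0 ∈ R → u1 ∈ R → u2 ∈ R →
      u0 + u1 * ζ + u2 * ζ ^ 2 = 0 → u0 = 0 ∧ u1 = 0 ∧ u2 = 0 := by
    intro u0 u1 u2 hu0 hu1 hu2 heq
    obtain ⟨a0, b0, rfl⟩ := repr u0 hu0
    obtain ⟨a1, b1, rfl⟩ := repr u1 hu1
    obtain ⟨a2, b2, rfl⟩ := repr u2 hu2
    have hg := Fintype.linearIndependent_iff.mp li
      ![(a0 : ℚ) + b0 - b2, (a1 : ℚ) + b0 + b1 - b2, (a2 : ℚ) + b0 + b1,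
        (b1 : ℚ), (b0 : ℚ), (b1 : ℚ) - b2]
      (by
        rw [Fin.sum_univ_six]
        show ((a0 : ℚ) + b0 - b2) • ζ ^ (0 : ℕ) + ((a1 : ℚ) + b0 + b1 - b2) • ζ ^ (1 : ℕ) +
          ((a2 : ℚ) + b0 + b1) • ζ ^ (2 : ℕ) + (b1 : ℚ) • ζ ^ (3 : ℕ) + (b0 : ℚ) • ζ ^ (4 : ℕ) +
          ((b1 : ℚ) - b2) • ζ ^ (5 : ℕ) = 0
        simp only [hsmul]
        push_cast
        rw [hα_def] at heq
        linear_combination heq - (b2 : CyclotomicField 7 ℚ) * hsum)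
    have e0 : (a0 : ℚ) + b0 - b2 = 0 := hg 0
    have e1 : (a1 : ℚ) + b0 + b1 - b2 = 0 := hg 1
    have e2 : (a2 : ℚ) + b0 + b1 = 0 := hg 2
    have hb1 : (b1 : ℚ) = 0 := hg 3
    have hb0 : (b0 : ℚ) = 0 := hg 4
    have e5 : (b1 : ℚ) - b2 = 0 := hg 5
    have hb2 : (b2 : ℚ) = 0 := by linarith
    have ha0 : (a0 : ℚ) = 0 := by linarith
    have ha1 : (a1 : ℚ) = 0 := by linarith
    have ha2 : (a2 : ℚ) = 0 := by linarith
    norm_num at hb0 hb1 hb2 ha0 ha1 ha2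
    subst ha0 ha1 ha2 hb0 hb1 hb2
    norm_num
  -- existence
  have exist : ∀ x ∈ Algebra.adjoin ℤ ({ζ} : Set (CyclotomicField 7 ℚ)),
      ∃ c0 c1 c2 : CyclotomicField 7 ℚ,
        c0 ∈ R ∧ c1 ∈ R ∧ c2 ∈ R ∧ x = c0 + c1 * ζ + c2 * ζ ^ 2 := by
    intro x hx
    induction hx using Algebra.adjoin_induction with
    | mem y hy =>
      rcases hy with rfl
      exact ⟨0, 1, 0, zero_mem R, h1R, zero_mem R, by ring⟩
    | algebraMap r =>
      refine ⟨algebraMap ℤ (CyclotomicField 7 ℚ) r, 0, 0, ?_, zero_mem R, zero_mem R, by ring⟩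
      exact Subalgebra.algebraMap_mem R r
    | add y z hy hz ihy ihz =>
      obtain ⟨a, b, c, ha, hb, hc, rfl⟩ := ihy
      obtain ⟨d, e, f, hd, he, hf, rfl⟩ := ihz
      exact ⟨a + d, b + e, c + f, add_mem ha hd, add_mem hb he, add_mem hc hf, by ring⟩
    | mul y z hy hz ihy ihz =>
      obtain ⟨a, b, c, ha, hb, hc, rfl⟩ := ihy
      obtain ⟨d, e, f, hd, he, hf, rfl⟩ := ihz
      refine ⟨a * d + b * f + c * e + c * f * (α - 1),
        a * e + b * d + (b * f + c * e) * α - c * f,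
        a * f + b * e + c * d + (b * f + c * e) * (α - 1) - c * f,
        ?_, ?_, ?_, by linear_combination (b * f + c * e) * h3 + c * f * h4⟩
      · exact add_mem (add_mem (add_mem (mul_mem ha hd) (mul_mem hb hf)) (mul_mem hc he))
          (mul_mem (mul_mem hc hf) (sub_mem hαR h1R))
      · exact sub_mem (add_mem (add_mem (mul_mem ha he) (mul_mem hb hd))
          (mul_mem (add_mem (mul_mem hb hf) (mul_mem hc he)) hαR)) (mul_mem hc hf)
      · exact sub_mem (add_mem (add_mem (add_mem (mul_mem ha hf) (mul_mem hb he))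
          (mul_mem hc hd))
          (mul_mem (add_mem (mul_mem hb hf) (mul_mem hc he)) (sub_mem hαR h1R))) (mul_mem hc hf)
  -- conclusion
  intro x hx
  obtain ⟨c0, c1, c2, hc0, hc1, hc2, hxeq⟩ := exist x hx
  refine ⟨![⟨c0, hc0⟩, ⟨c1, hc1⟩, ⟨c2, hc2⟩], ?_, ?_⟩
  · simp only [Matrix.cons_val_zero, Matrix.cons_val_one, Matrix.head_cons, Matrix.cons_val_two,
      Matrix.tail_cons]
    exact hxeq.symm
  · intro d hd
    have hdiff : ((d 0 : CyclotomicField 7 ℚ) - c0) + ((d 1 : CyclotomicField 7 ℚ) - c1) * ζ +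
        ((d 2 : CyclotomicField 7 ℚ) - c2) * ζ ^ 2 = 0 := by
      rw [hxeq] at hd; linear_combination hd
    obtain ⟨z0, z1, z2⟩ := key _ _ _ (sub_mem (d 0).2 hc0) (sub_mem (d 1).2 hc1)
      (sub_mem (d 2).2 hc2) hdiff
    funext i
    fin_cases i
    · exact Subtype.ext (by simpa [sub_eq_zero] using z0)
    · exact Subtype.ext (by simpa [sub_eq_zero] using z1)
    · exact Subtype.ext (by simpa [sub_eq_zero] using z2)
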